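/- Let λ > 0 and α > 1, let (E_k)_{k≥1} be i.i.d. exponential random variables with rate λ, put τ_k = E_1 + ⋯ + E_k, and let (ξ_k)_{k≥1} be i.i.d. ℝ^d-valued random variables independent of (E_k). Then the series Σ_{k=1}^∞ τ_k^{−α} ξ_k converges almost surely if and only if E[‖ξ₁‖^{1/α}] < ∞. (Example 2 of Section 4.) -/

import Mathlib

open MeasureTheory Filter Set ProbabilityTheory

/-- The type family for the combined family of arrival increments (`ℝ`-valued, index
`Sum.inl k`) and jumps (`ℝ^d`-valued, index `Sum.inr k`). -/
abbrev jointType (d : ℕ) : ℕ ⊕ ℕ → Type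
  | .inl _ => ℝ
  | .inr _ => EuclideanSpace ℝ (Fin d)

/-- The measurable space structures on the combined family. -/
def jointMS (d : ℕ) : (i : ℕ ⊕ ℕ) → MeasurableSpace (jointType d i)
  | .inl _ => inferInstance
  | .inr _ => inferInstance

/-- The combined family of random variables: the increments `E k` and the jumps `ξ k`. -/
def jointFam {Ω : Type*} {d : ℕ} (E : ℕ → Ω → ℝ)
    (ξ : ℕ → Ω → EuclideanSpace ℝ (Fin d)) : (i : ℕ ⊕ ℕ) → Ω → jointType d i
  | .inl k => E k
  | .inr k => ξ k


section Aux
open scoped ENNReal NNReal Topology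

lemma tsum_meas_le_lintegral {β : Type*} [MeasurableSpace β] (μ : Measure β) {g : β → ℝ}
    (hg : Measurable g) :
    ∑' k : ℕ, μ {a | (k : ℝ) + 1 ≤ g a} ≤ ∫⁻ a, ENNReal.ofReal (g a) ∂μ := by
  set I : ℕ → Set β := fun k => {a | (k : ℝ) + 1 ≤ g a} with hI
  have hms : ∀ k : ℕ, MeasurableSet (I k) := fun k =>
    measurableSet_le measurable_const hg
  calc ∑' k : ℕ, μ (I k)
      = ∑' k : ℕ, ∫⁻ a, (I k).indicator (1 : β → ℝ≥0∞) a ∂μ := by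
        simp_rw [lintegral_indicator_one (hms _)]
    _ = ∫⁻ a, ∑' k : ℕ, (I k).indicator (1 : β → ℝ≥0∞) a ∂μ :=
        (lintegral_tsum fun k => ((measurable_one).indicator (hms k)).aemeasurable).symm
    _ ≤ ∫⁻ a, ENNReal.ofReal (g a) ∂μ := by
        refine lintegral_mono fun a => ?_
        set N : ℕ := ⌊g a⌋₊ with hN
        have hsum : ∑' k : ℕ, (I k).indicator (1 : β → ℝ≥0∞) a
            = ∑ k ∈ Finset.range N, (I k).indicator (1 : β → ℝ≥0∞) a := by
          refine tsum_eq_sum fun k hk => ?_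
          rw [Finset.mem_range, not_lt] at hk
          have hnot : a ∉ I k := by
            intro hmem
            have h : (k : ℝ) + 1 ≤ g a := hmem
            have hga : 0 ≤ g a := le_trans (by positivity) h
            have : k + 1 ≤ N := Nat.le_floor (by push_cast; linarith)
            omega
          exact indicator_of_notMem hnot _
        rw [hsum]
        calc ∑ k ∈ Finset.range N, (I k).indicator (1 : β → ℝ≥0∞) a
            ≤ ∑ _k ∈ Finset.range N, (1 : ℝ≥0∞) :=
              Finset.sum_le_sum fun k _ => indicator_le_self _ _ a
          _ = (N : ℝ≥0∞) := by simp
          _ ≤ ENNReal.ofReal (g a) := by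
              rcases le_or_gt 0 (g a) with h | h
              · rw [← ENNReal.ofReal_natCast]
                exact ENNReal.ofReal_le_ofReal (Nat.floor_le h)
              · simp [hN, Nat.floor_of_nonpos h.le]

lemma lintegral_le_tsum_meas {β : Type*} [MeasurableSpace β] (μ : Measure β) {g : β → ℝ}
    (hg : Measurable g) :
    ∫⁻ a, ENNReal.ofReal (g a) ∂μ ≤ μ univ + ∑' k : ℕ, μ {a | (k : ℝ) + 1 ≤ g a} := by
  set I : ℕ → Set β := fun k => {a | (k : ℝ) + 1 ≤ g a} with hI
  have hms : ∀ k : ℕ, MeasurableSet (I k) := fun k =>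
    measurableSet_le measurable_const hg
  have key : ∀ a, ENNReal.ofReal (g a)
      ≤ 1 + ∑' k : ℕ, (I k).indicator (1 : β → ℝ≥0∞) a := by
    intro a
    rcases le_or_gt (g a) 0 with h | h
    · simp [ENNReal.ofReal_eq_zero.2 h]
    set N : ℕ := ⌊g a⌋₊ with hN
    have h1 : ENNReal.ofReal (g a) ≤ (N : ℝ≥0∞) + 1 := by
      rw [← ENNReal.ofReal_natCast, ← ENNReal.ofReal_one, ← ENNReal.ofReal_add (by positivity)
        zero_le_one]
      exact ENNReal.ofReal_le_ofReal (Nat.lt_floor_add_one (g a)).le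
    have hNle : (N : ℝ≥0∞) ≤ ∑' k : ℕ, (I k).indicator (1 : β → ℝ≥0∞) a := by
      calc (N : ℝ≥0∞) = ∑ k ∈ Finset.range N, (1 : ℝ≥0∞) := by simp
      _ ≤ ∑ k ∈ Finset.range N, (I k).indicator (1 : β → ℝ≥0∞) a := by
          refine Finset.sum_le_sum fun k hk => ?_
          rw [Finset.mem_range] at hk
          have hmem : a ∈ I k := by
            have h2 : (k + 1 : ℕ) ≤ N := hk
            have h3 := (Nat.le_floor_iff h.le).1 h2
            show (k : ℝ) + 1 ≤ g a
            push_cast at h3 ⊢; linarith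
          simp [indicator_of_mem hmem]
      _ ≤ _ := ENNReal.sum_le_tsum _
    calc ENNReal.ofReal (g a) ≤ (N : ℝ≥0∞) + 1 := h1
      _ ≤ (∑' k : ℕ, (I k).indicator (1 : β → ℝ≥0∞) a) + 1 := add_le_add hNle le_rfl
      _ = 1 + ∑' k : ℕ, (I k).indicator (1 : β → ℝ≥0∞) a := add_comm _ _
  calc ∫⁻ a, ENNReal.ofReal (g a) ∂μ
      ≤ ∫⁻ a, (1 + ∑' k : ℕ, (I k).indicator (1 : β → ℝ≥0∞) a) ∂μ :=
        lintegral_mono key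
    _ = μ univ + ∑' k : ℕ, μ (I k) := by
        rw [lintegral_add_left measurable_const,
          lintegral_tsum fun k => ((measurable_one).indicator (hms k)).aemeasurable]
        simp_rw [lintegral_indicator_one (hms _), lintegral_const, one_mul]

lemma step_rpow {α : ℝ} (hα : 1 < α) {x : ℝ} (hx : 1 ≤ x) :
    (α - 1) * (x + 1) ^ (-α) ≤ x ^ (1 - α) - (x + 1) ^ (1 - α) := by
  have hx0 : (0 : ℝ) < x := lt_of_lt_of_le one_pos hx
  obtain ⟨c, hc, hceq⟩ := exists_hasDerivAt_eq_slope (fun y => y ^ (1 - α))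
    (fun y => (1 - α) * y ^ (-α)) (by linarith : x < x + 1)
    (by
      refine ContinuousOn.rpow_const continuousOn_id fun y hy => Or.inl ?_
      exact ne_of_gt (lt_of_lt_of_le hx0 hy.1))
    (fun y hy => by
      have hy0 : y ≠ 0 := ne_of_gt (lt_of_lt_of_le hx0 hy.1.le)
      have := Real.hasDerivAt_rpow_const (p := 1 - α) (Or.inl hy0)
      simpa [show 1 - α - 1 = -α by ring] using this)
  have hcb : (1 - α) * c ^ (-α) = (x + 1) ^ (1 - α) - x ^ (1 - α) := by
    rw [hceq]; ring_nf
  have hle : (x + 1) ^ (-α) ≤ c ^ (-α) :=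
    Real.rpow_le_rpow_of_nonpos (by linarith [hc.1] : (0:ℝ) < c) hc.2.le (by linarith)
  nlinarith [hle, hcb]

lemma summable_shift_rpow {α : ℝ} (hα : 1 < α) (m : ℕ) :
    Summable (fun k : ℕ => ((m : ℝ) + k) ^ (-α)) := by
  have h0 : Summable (fun k : ℕ => (k : ℝ) ^ (-α)) :=
    Real.summable_nat_rpow.2 (by linarith)
  have := (summable_nat_add_iff m).2 h0
  refine this.congr fun k => ?_
  push_cast
  rw [add_comm]

lemma tail_rpow_sum_le {α : ℝ} (hα : 1 < α) {m : ℕ} (hm : 1 ≤ m) :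
    ∑' k : ℕ, ((m : ℝ) + k) ^ (-α) ≤ (1 + (α - 1)⁻¹) * (m : ℝ) ^ (1 - α) := by
  have hm0 : (0 : ℝ) < m := by exact_mod_cast hm
  have hm1 : (1 : ℝ) ≤ m := by exact_mod_cast hm
  have hα1 : (0 : ℝ) < α - 1 := by linarith
  set f : ℕ → ℝ := fun k => ((m : ℝ) + k) ^ (-α) with hf
  set g : ℕ → ℝ := fun k => ((m : ℝ) + k) ^ (1 - α) with hg
  have key : ∀ k : ℕ, f (k + 1) ≤ (α - 1)⁻¹ * (g k - g (k + 1)) := by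
    intro k
    have hx1 : (1 : ℝ) ≤ (m : ℝ) + k := le_add_of_le_of_nonneg hm1 (Nat.cast_nonneg k)
    have hcast : ((m : ℝ) + (k + 1 : ℕ)) = ((m : ℝ) + k) + 1 := by push_cast; ring
    have h2 := step_rpow hα hx1
    have h5 := mul_le_mul_of_nonneg_left h2 (inv_pos.2 hα1).le
    rw [← mul_assoc, inv_mul_cancel₀ (ne_of_gt hα1), one_mul] at h5
    have hc2 : (m : ℝ) + ((k : ℝ) + 1) = (m : ℝ) + k + 1 := by ring
    simpa [hf, hg, hcast, hc2] using h5
  have hpart : ∀ n : ℕ, ∑ k ∈ Finset.range n, f k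
      ≤ (m : ℝ) ^ (-α) + (α - 1)⁻¹ * (m : ℝ) ^ (1 - α) := by
    intro n
    cases n with
    | zero => simp; positivity
    | succ n =>
      rw [Finset.sum_range_succ']
      have htel : ∑ k ∈ Finset.range n, f (k + 1)
          ≤ (α - 1)⁻¹ * (g 0 - g n) := by
        calc ∑ k ∈ Finset.range n, f (k + 1)
            ≤ ∑ k ∈ Finset.range n, (α - 1)⁻¹ * (g k - g (k + 1)) :=
              Finset.sum_le_sum fun k _ => key k
          _ = (α - 1)⁻¹ * (g 0 - g n) := by
              rw [← Finset.mul_sum, Finset.sum_range_sub' g n]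
      have hg0 : g 0 = (m : ℝ) ^ (1 - α) := by simp [hg]
      have hf0 : f 0 = (m : ℝ) ^ (-α) := by simp [hf]
      have hgn : (0 : ℝ) ≤ g n := Real.rpow_nonneg (by positivity) _
      have := htel
      rw [hg0] at this
      have h3 : (α - 1)⁻¹ * ((m : ℝ) ^ (1 - α) - g n) ≤ (α - 1)⁻¹ * (m : ℝ) ^ (1 - α) :=
        mul_le_mul_of_nonneg_left (by linarith) (inv_pos.2 hα1).le
      rw [hf0]
      linarith [this.trans h3]
  have hsum : ∑' k : ℕ, f k ≤ (m : ℝ) ^ (-α) + (α - 1)⁻¹ * (m : ℝ) ^ (1 - α) :=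
    Real.tsum_le_of_sum_range_le (fun n => Real.rpow_nonneg (by positivity) _) hpart
  refine hsum.trans ?_
  have hmono : (m : ℝ) ^ (-α) ≤ (m : ℝ) ^ (1 - α) :=
    Real.rpow_le_rpow_of_exponent_le hm1 (by linarith)
  nlinarith [Real.rpow_nonneg (le_of_lt hm0) (1 - α), inv_pos.2 hα1]

lemma pointwise_trunc_sum_le {α : ℝ} (hα : 1 < α) {x : ℝ} (hx : 0 ≤ x) :
    ∑' k : ℕ, ENNReal.ofReal (((k : ℝ) + 1) ^ (-α) * min x (((k : ℝ) + 1) ^ α))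
      ≤ ENNReal.ofReal ((2 + (α - 1)⁻¹) * (1 + x ^ (1 / α))) := by
  have hα0 : (0 : ℝ) < α := by linarith
  set f : ℕ → ℝ := fun k => ((k : ℝ) + 1) ^ (-α) * min x (((k : ℝ) + 1) ^ α) with hfdef
  have hf_nonneg : ∀ k, 0 ≤ f k := fun k =>
    mul_nonneg (Real.rpow_nonneg (by positivity) _) (le_min hx (Real.rpow_nonneg (by positivity) _))
  have hfle1 : ∀ k, f k ≤ 1 := by
    intro k
    have h1 : f k ≤ ((k : ℝ) + 1) ^ (-α) * ((k : ℝ) + 1) ^ α :=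
      mul_le_mul_of_nonneg_left (min_le_right _ _) (Real.rpow_nonneg (by positivity) _)
    rwa [← Real.rpow_add (by positivity), neg_add_cancel, Real.rpow_zero] at h1
  have hflex : ∀ k, f k ≤ x * ((k : ℝ) + 1) ^ (-α) := by
    intro k
    calc f k = min x (((k : ℝ) + 1) ^ α) * ((k : ℝ) + 1) ^ (-α) := mul_comm _ _
      _ ≤ x * ((k : ℝ) + 1) ^ (-α) := mul_le_mul_of_nonneg_right (min_le_left _ _)
          (Real.rpow_nonneg (by positivity : (0:ℝ) ≤ (k : ℝ) + 1) (-α))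
  have hsummable : Summable f := by
    refine Summable.of_nonneg_of_le hf_nonneg hflex ?_
    have := (summable_shift_rpow hα 1).mul_left x
    refine this.congr fun k => ?_
    norm_num [add_comm]
  set y : ℝ := x ^ (1 / α) with hy
  have hy0 : 0 ≤ y := Real.rpow_nonneg hx _
  set N : ℕ := ⌈y⌉₊ with hN
  have hsplit := Summable.sum_add_tsum_nat_add (f := f) N hsummable
  have hhead : ∑ k ∈ Finset.range N, f k ≤ (N : ℝ) := by
    calc ∑ k ∈ Finset.range N, f k ≤ ∑ _k ∈ Finset.range N, (1 : ℝ) :=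
        Finset.sum_le_sum fun k _ => hfle1 k
      _ = (N : ℝ) := by simp
  have htail : ∑' j : ℕ, f (j + N) ≤ (1 + (α - 1)⁻¹) * (1 + y) := by
    have hterm : ∀ j : ℕ, f (j + N) ≤ x * (((N + 1 : ℕ) : ℝ) + j) ^ (-α) := by
      intro j
      refine (hflex (j + N)).trans (le_of_eq ?_)
      congr 2
      push_cast; ring
    have hsum2 : Summable (fun j : ℕ => x * (((N + 1 : ℕ) : ℝ) + j) ^ (-α)) :=
      (summable_shift_rpow hα (N + 1)).mul_left x
    have h6 : ∑' j : ℕ, f (j + N) ≤ ∑' j : ℕ, x * (((N + 1 : ℕ) : ℝ) + j) ^ (-α) :=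
      Summable.tsum_le_tsum hterm ((hsummable.comp_injective (add_left_injective N))) hsum2
    rw [tsum_mul_left] at h6
    have h7 : x * ∑' j : ℕ, (((N + 1 : ℕ) : ℝ) + j) ^ (-α)
        ≤ x * ((1 + (α - 1)⁻¹) * ((N + 1 : ℕ) : ℝ) ^ (1 - α)) :=
      mul_le_mul_of_nonneg_left (tail_rpow_sum_le hα (Nat.le_add_left 1 N)) hx
    refine h6.trans (h7.trans ?_)
    have hC : (0 : ℝ) ≤ 1 + (α - 1)⁻¹ := by
      have : (0:ℝ) < (α-1)⁻¹ := inv_pos.2 (by linarith)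
      linarith
    rcases le_or_gt x 1 with hx1 | hx1
    · have h8 : (((N + 1 : ℕ) : ℝ)) ^ (1 - α) ≤ 1 :=
        Real.rpow_le_one_of_one_le_of_nonpos (by exact_mod_cast Nat.le_add_left 1 N) (by linarith)
      have : x * ((1 + (α - 1)⁻¹) * ((N + 1 : ℕ) : ℝ) ^ (1 - α)) ≤ 1 * ((1 + (α - 1)⁻¹) * 1) := by
        apply mul_le_mul hx1 (mul_le_mul_of_nonneg_left h8 hC) ?_ zero_le_one
        positivity
      nlinarith [this, hC, hy0]
    · have hy1 : 1 ≤ y := by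
        rw [hy]
        have := Real.rpow_le_rpow (by norm_num) hx1.le (le_of_lt (one_div_pos.2 hα0))
        simpa using this
      have hyN : y ≤ ((N + 1 : ℕ) : ℝ) := by
        push_cast
        have := Nat.le_ceil y
        linarith
      have h8 : (((N + 1 : ℕ) : ℝ)) ^ (1 - α) ≤ y ^ (1 - α) :=
        Real.rpow_le_rpow_of_nonpos (by linarith) hyN (by linarith)
      have hxy : x = y ^ α := by
        rw [hy, one_div, Real.rpow_inv_rpow hx (ne_of_gt hα0)]
      have h9 : x * ((1 + (α - 1)⁻¹) * ((N + 1 : ℕ) : ℝ) ^ (1 - α))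
          ≤ (1 + (α - 1)⁻¹) * (y ^ α * y ^ (1 - α)) := by
        rw [hxy]
        have := mul_le_mul_of_nonneg_left h8 (Real.rpow_nonneg (by linarith : (0:ℝ) ≤ y) α)
        nlinarith [this, hC, Real.rpow_nonneg (by linarith : (0:ℝ) ≤ y) α,
          Real.rpow_nonneg (by positivity : (0:ℝ) ≤ ((N + 1 : ℕ) : ℝ)) (1 - α)]
      refine h9.trans ?_
      rw [← Real.rpow_add (by linarith : (0:ℝ) < y), show α + (1 - α) = 1 by ring,
        Real.rpow_one]
      nlinarith [hC]
  have hfinal : ∑' k, f k ≤ (2 + (α - 1)⁻¹) * (1 + y) := by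
    rw [← hsplit]
    have hNy : (N : ℝ) ≤ y + 1 := by
      have := Nat.ceil_lt_add_one hy0
      linarith
    have hC : (0 : ℝ) ≤ 1 + (α - 1)⁻¹ := by
      have : (0:ℝ) < (α-1)⁻¹ := inv_pos.2 (by linarith)
      linarith
    nlinarith [hhead, htail, hNy, hC, hy0]
  calc ∑' k : ℕ, ENNReal.ofReal (f k) = ENNReal.ofReal (∑' k, f k) :=
      (ENNReal.ofReal_tsum_of_nonneg hf_nonneg hsummable).symm
    _ ≤ _ := ENNReal.ofReal_le_ofReal hfinal

lemma expMeasure_apply {lam : ℝ} {s : Set ℝ} (hs : MeasurableSet s) :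
    expMeasure lam s = ∫⁻ x in s, exponentialPDF lam x := by
  rw [expMeasure, gammaMeasure, withDensity_apply _ hs]; rfl

lemma expMeasure_Iic {lam : ℝ} (hlam : 0 < lam) {x : ℝ} :
    expMeasure lam (Iic x) = ENNReal.ofReal (if 0 ≤ x then 1 - Real.exp (-(lam * x)) else 0) := by
  rw [expMeasure_apply measurableSet_Iic]
  exact lintegral_exponentialPDF_eq_antiDeriv hlam x

lemma expMeasure_nonpos {lam : ℝ} (hlam : 0 < lam) :
    expMeasure lam {x : ℝ | x ≤ 0} = 0 := by
  have h : {x : ℝ | x ≤ 0} = Iic (0:ℝ) := rfl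
  rw [h, expMeasure_Iic hlam]
  simp

lemma expMeasure_tail {lam : ℝ} (hlam : 0 < lam) (k : ℕ) :
    expMeasure lam {x : ℝ | (k : ℝ) + 1 ≤ x} ≤ ENNReal.ofReal (Real.exp (-(lam * k))) := by
  have : IsProbabilityMeasure (expMeasure lam) := isProbabilityMeasure_expMeasure hlam
  have hsub : {x : ℝ | (k : ℝ) + 1 ≤ x} ⊆ (Iic (k : ℝ))ᶜ := by
    intro x hx
    simp only [mem_compl_iff, mem_Iic, not_le]
    have : (k:ℝ) + 1 ≤ x := hx
    linarith
  have hof : ENNReal.ofReal (Real.exp (-(lam * k))) ≤ 1 := by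
    rw [← ENNReal.ofReal_one]
    exact ENNReal.ofReal_le_ofReal (Real.exp_le_one_iff.2 (neg_nonpos.2 (by positivity : (0:ℝ) ≤ lam * (k:ℝ))))
  calc expMeasure lam {x : ℝ | (k : ℝ) + 1 ≤ x} ≤ expMeasure lam (Iic (k : ℝ))ᶜ :=
      measure_mono hsub
    _ = 1 - expMeasure lam (Iic (k : ℝ)) := by
      rw [measure_compl measurableSet_Iic (measure_ne_top _ _), measure_univ]
    _ ≤ ENNReal.ofReal (Real.exp (-(lam * k))) := by
      rw [expMeasure_Iic hlam, if_pos (by positivity : (0:ℝ) ≤ (k:ℝ)),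
        ENNReal.ofReal_sub _ (Real.exp_pos _).le, ENNReal.ofReal_one]
      exact (ENNReal.sub_sub_cancel ENNReal.one_ne_top hof).le

lemma lintegral_expMeasure_lt_top {lam : ℝ} (hlam : 0 < lam) :
    ∫⁻ x, ENNReal.ofReal x ∂(expMeasure lam) < ∞ := by
  have : IsProbabilityMeasure (expMeasure lam) := isProbabilityMeasure_expMeasure hlam
  have h1 := lintegral_le_tsum_meas (expMeasure lam) (measurable_id : Measurable fun x : ℝ => x)
  refine lt_of_le_of_lt h1 ?_
  rw [measure_univ]
  have h2 : ∑' k : ℕ, expMeasure lam {x : ℝ | (k : ℝ) + 1 ≤ x}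
      ≤ ∑' k : ℕ, ENNReal.ofReal (Real.exp (-lam)) ^ k := by
    refine ENNReal.tsum_le_tsum fun k => ?_
    refine (expMeasure_tail hlam k).trans (le_of_eq ?_)
    rw [← ENNReal.ofReal_pow (Real.exp_pos _).le, ← Real.exp_nat_mul]
    congr 1; ring_nf
  have h3 : ∑' k : ℕ, ENNReal.ofReal (Real.exp (-lam)) ^ k < ∞ := by
    rw [ENNReal.tsum_geometric]
    refine ENNReal.inv_lt_top.2 ?_
    rw [tsub_pos_iff_lt, ← ENNReal.ofReal_one]
    exact (ENNReal.ofReal_lt_ofReal_iff_of_nonneg (Real.exp_pos _).le).2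
      (Real.exp_lt_one_iff.2 (by linarith))
  exact ENNReal.add_lt_top.2 ⟨ENNReal.one_lt_top, lt_of_le_of_lt h2 h3⟩

section IndepAux
variable {Ω : Type*} [MeasurableSpace Ω] {P : Measure Ω} {d : ℕ}
  {E : ℕ → Ω → ℝ} {ξ : ℕ → Ω → EuclideanSpace ℝ (Fin d)}

lemma indepFun_E (hindep : iIndepFun (m := jointMS d) (jointFam E ξ) P) {i j : ℕ} (hij : i ≠ j) :
    IndepFun (E i) (E j) P := by
  have h := hindep.indepFun (i := Sum.inl i) (j := Sum.inl j) (by simpa using hij)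
  exact h

lemma iIndepFun_xi (hindep : iIndepFun (m := jointMS d) (jointFam E ξ) P) :
    iIndepFun (m := fun _ : ℕ => (inferInstance : MeasurableSpace (EuclideanSpace ℝ (Fin d)))) ξ P := by
  rw [iIndepFun_iff_measure_inter_preimage_eq_mul]
  intro S sets H
  classical
  set emb : ℕ ↪ ℕ ⊕ ℕ := ⟨Sum.inr, Sum.inr_injective⟩ with hemb
  set sets' : ∀ i : ℕ ⊕ ℕ, Set (jointType d i) := fun i =>
    match i with
    | .inl _ => univ
    | .inr k => sets k with hsets'
  have H' : ∀ i : ℕ ⊕ ℕ, i ∈ S.map emb → MeasurableSet[jointMS d i] (sets' i) := by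
    intro i hi
    rw [Finset.mem_map] at hi
    obtain ⟨k, hk, rfl⟩ := hi
    exact H k hk
  have key := hindep.measure_inter_preimage_eq_mul (S.map emb) H'
  have h1 : ⋂ i ∈ S.map emb, jointFam E ξ i ⁻¹' sets' i = ⋂ k ∈ S, ξ k ⁻¹' sets k := by
    ext ω
    simp only [mem_iInter, Finset.mem_map, hemb, Function.Embedding.coeFn_mk]
    constructor
    · intro h k hk
      exact h (Sum.inr k) ⟨k, hk, rfl⟩
    · rintro h i ⟨k, hk, rfl⟩
      exact h k hk
  have h2 : ∏ i ∈ S.map emb, P (jointFam E ξ i ⁻¹' sets' i)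
      = ∏ k ∈ S, P (ξ k ⁻¹' sets k) := by
    rw [Finset.prod_map]
    rfl
  rw [h1, h2] at key
  exact key

lemma iIndepSet_xi (hindep : iIndepFun (m := jointMS d) (jointFam E ξ) P)
    (hξm : ∀ k, Measurable (ξ k))
    {B : ℕ → Set (EuclideanSpace ℝ (Fin d))} (hB : ∀ k, MeasurableSet (B k)) :
    iIndepSet (fun k => ξ k ⁻¹' B k) P := by
  refine (iIndepSet_iff_meas_biInter (fun k => (hξm k) (hB k))).2 fun s => ?_
  exact (iIndepFun_xi hindep).measure_inter_preimage_eq_mul s (fun i _ => hB i)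

end IndepAux

section ProbAux
variable {Ω : Type*} [MeasurableSpace Ω] {P : Measure Ω} [IsProbabilityMeasure P]
  {lam : ℝ} {E : ℕ → Ω → ℝ}

lemma ae_pos_E (hlam : 0 < lam) (hEm : ∀ k, Measurable (E k))
    (hE : ∀ k, Measure.map (E k) P = expMeasure lam) :
    ∀ᵐ ω ∂P, ∀ k, 0 < E k ω := by
  rw [ae_all_iff]
  intro k
  have h : P {ω | E k ω ≤ 0} = 0 := by
    have hms : MeasurableSet {x : ℝ | x ≤ 0} := measurableSet_Iic
    have := Measure.map_apply (μ := P) (hEm k) hms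
    rw [hE k, expMeasure_nonpos hlam] at this
    exact this.symm
  filter_upwards [measure_eq_zero_iff_ae_notMem.1 h] with ω hω
  simpa using not_le.1 hω

lemma integrable_E (hlam : 0 < lam) (hEm : ∀ k, Measurable (E k))
    (hE : ∀ k, Measure.map (E k) P = expMeasure lam) : Integrable (E 0) P := by
  refine ⟨(hEm 0).aestronglyMeasurable, ?_⟩
  rw [hasFiniteIntegral_iff_norm]
  have h1 : ∫⁻ ω, ENNReal.ofReal ‖E 0 ω‖ ∂P = ∫⁻ x, ENNReal.ofReal ‖x‖ ∂(expMeasure lam) := by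
    rw [← hE 0]
    exact (lintegral_map (ENNReal.measurable_ofReal.comp measurable_norm) (hEm 0)).symm
  rw [h1]
  have h2 : ∫⁻ x, ENNReal.ofReal ‖x‖ ∂(expMeasure lam) = ∫⁻ x, ENNReal.ofReal x ∂(expMeasure lam) := by
    refine lintegral_congr_ae ?_
    have h3 : ∀ᵐ x ∂(expMeasure lam), 0 < x := by
      filter_upwards [measure_eq_zero_iff_ae_notMem.1 (expMeasure_nonpos hlam)] with x hx
      simpa using not_le.1 hx
    filter_upwards [h3] with x hx
    rw [Real.norm_eq_abs, abs_of_pos hx]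
  rw [h2]
  exact lintegral_expMeasure_lt_top hlam

lemma slln_E {d : ℕ} {ξ : ℕ → Ω → EuclideanSpace ℝ (Fin d)} (hlam : 0 < lam)
    (hEm : ∀ k, Measurable (E k))
    (hindep : iIndepFun (m := jointMS d) (jointFam E ξ) P)
    (hE : ∀ k, Measure.map (E k) P = expMeasure lam) :
    ∃ m : ℝ, 0 < m ∧ ∀ᵐ ω ∂P,
      Tendsto (fun n : ℕ => (n : ℝ)⁻¹ * ∑ i ∈ Finset.range n, E i ω) atTop (𝓝 m) := by
  have hint : Integrable (E 0) P := integrable_E hlam hEm hE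
  have hident : ∀ i, IdentDistrib (E i) (E 0) P P := fun i =>
    ⟨(hEm i).aemeasurable, (hEm 0).aemeasurable, by rw [hE i, hE 0]⟩
  have hpair : Pairwise (Function.onFun (IndepFun · · P) E) := fun i j hij => by
    have h := hindep.indepFun (i := Sum.inl i) (j := Sum.inl j) (by simpa using hij)
    exact h
  refine ⟨∫ ω, E 0 ω ∂P, ?_, ?_⟩
  · have hae : 0 ≤ᵐ[P] E 0 := by
      filter_upwards [ae_pos_E hlam hEm hE] with ω hω using (hω 0).le
    rw [integral_pos_iff_support_of_nonneg_ae hae hint]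
    have hsub : {ω | 0 < E 0 ω} ⊆ Function.support (E 0) := fun ω hω => ne_of_gt hω
    have h1 : P {ω | 0 < E 0 ω} = 1 := by
      have h : P {ω | E 0 ω ≤ 0} = 0 := by
        have hms : MeasurableSet {x : ℝ | x ≤ 0} := measurableSet_Iic
        have := Measure.map_apply (μ := P) (hEm 0) hms
        rw [hE 0, expMeasure_nonpos hlam] at this
        exact this.symm
      have : {ω | 0 < E 0 ω} = {ω | E 0 ω ≤ 0}ᶜ := by ext ω; simp [not_le]
      have hms2 : MeasurableSet {ω | E 0 ω ≤ 0} := measurableSet_le (hEm 0) measurable_const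
      rw [this, measure_compl hms2 (by rw [h]; exact ENNReal.zero_ne_top), h,
        measure_univ, tsub_zero]
    calc (0 : ℝ≥0∞) < 1 := zero_lt_one
      _ = P {ω | 0 < E 0 ω} := h1.symm
      _ ≤ P (Function.support (E 0)) := measure_mono hsub
  · have := strong_law_ae E hint hpair hident
    filter_upwards [this] with ω hω
    simpa [smul_eq_mul] using hω

end ProbAux
end Aux

section Aux2
open scoped ENNReal NNReal Topology

set_option maxHeartbeats 1000000 in
theorem forward_dir
    {Ω : Type*} [MeasurableSpace Ω] (P : Measure Ω) [IsProbabilityMeasure P]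
    {d : ℕ} (lam α : ℝ) (hlam : 0 < lam) (hα : 1 < α)
    (E : ℕ → Ω → ℝ) (ξ : ℕ → Ω → EuclideanSpace ℝ (Fin d))
    (hEm : ∀ k, Measurable (E k)) (hξm : ∀ k, Measurable (ξ k))
    (hindep : iIndepFun (m := jointMS d) (jointFam E ξ) P)
    (hE : ∀ k, Measure.map (E k) P = expMeasure lam)
    (hξ : ∀ k, Measure.map (ξ k) P = Measure.map (ξ 0) P)
    (hmom : ∫⁻ ω, ENNReal.ofReal (‖ξ 0 ω‖ ^ (1 / α)) ∂P < ⊤) :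
    ∀ᵐ ω ∂P, ∃ l : EuclideanSpace ℝ (Fin d),
        Tendsto (fun n => ∑ k ∈ Finset.range n,
            ((∑ i ∈ Finset.range (k + 1), E i ω) ^ (-α)) • ξ k ω)
          atTop (nhds l) := by
  have hα0 : (0 : ℝ) < α := by linarith
  set g : Ω → ℝ := fun ω => ‖ξ 0 ω‖ ^ (1 / α) with hgdef
  have hgm : Measurable g := by fun_prop
  -- Borel-Cantelli I : eventually ‖ξ k ω‖ ≤ (k+1)^α
  set B : ℕ → Set (EuclideanSpace ℝ (Fin d)) := fun k => {v | (k : ℝ) + 1 ≤ ‖v‖ ^ (1 / α)}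
    with hBdef
  have hBm : ∀ k, MeasurableSet (B k) := fun k =>
    measurableSet_le measurable_const (by fun_prop)
  have hPs : ∀ k, P (ξ k ⁻¹' B k) = P {ω | (k : ℝ) + 1 ≤ g ω} := by
    intro k
    rw [← Measure.map_apply (μ := P) (hξm k) (hBm k), hξ k,
      Measure.map_apply (μ := P) (hξm 0) (hBm k)]
    rfl
  have hBC : ∀ᵐ ω ∂P, ∀ᶠ k in atTop, ω ∉ ξ k ⁻¹' B k := by
    refine ae_eventually_notMem (ne_of_lt ?_)
    calc ∑' k : ℕ, P (ξ k ⁻¹' B k) = ∑' k : ℕ, P {ω | (k : ℝ) + 1 ≤ g ω} := by simp_rw [hPs]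
      _ ≤ ∫⁻ ω, ENNReal.ofReal (g ω) ∂P := tsum_meas_le_lintegral P hgm
      _ < ⊤ := hmom
  -- truncated series has finite integral
  set u : ℕ → Ω → ℝ := fun k ω => ((k : ℝ) + 1) ^ (-α) * min ‖ξ k ω‖ (((k : ℝ) + 1) ^ α)
    with hudef
  have hum : ∀ k, Measurable (u k) := fun k =>
    measurable_const.mul (((hξm k).norm).min measurable_const)
  have hu_nonneg : ∀ k ω, 0 ≤ u k ω := fun k ω =>
    mul_nonneg (Real.rpow_nonneg (by positivity) _)
      (le_min (norm_nonneg _) (Real.rpow_nonneg (by positivity) _))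
  have hT : ∫⁻ ω, ∑' k : ℕ, ENNReal.ofReal (u k ω) ∂P < ⊤ := by
    have hswap : ∫⁻ ω, ∑' k : ℕ, ENNReal.ofReal (u k ω) ∂P
        = ∑' k : ℕ, ∫⁻ ω, ENNReal.ofReal (u k ω) ∂P :=
      lintegral_tsum fun k => ((hum k).ennreal_ofReal).aemeasurable
    have hpush : ∀ k, ∫⁻ ω, ENNReal.ofReal (u k ω) ∂P
        = ∫⁻ ω, ENNReal.ofReal (((k : ℝ) + 1) ^ (-α) * min ‖ξ 0 ω‖ (((k : ℝ) + 1) ^ α)) ∂P := by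
      intro k
      have hFm : Measurable (fun v : EuclideanSpace ℝ (Fin d) =>
          ENNReal.ofReal (((k : ℝ) + 1) ^ (-α) * min ‖v‖ (((k : ℝ) + 1) ^ α))) :=
        (measurable_const.mul (measurable_norm.min measurable_const)).ennreal_ofReal
      calc ∫⁻ ω, ENNReal.ofReal (u k ω) ∂P
          = ∫⁻ v, ENNReal.ofReal (((k : ℝ) + 1) ^ (-α) * min ‖v‖ (((k : ℝ) + 1) ^ α))
            ∂(Measure.map (ξ k) P) := (lintegral_map hFm (hξm k)).symm
        _ = ∫⁻ v, ENNReal.ofReal (((k : ℝ) + 1) ^ (-α) * min ‖v‖ (((k : ℝ) + 1) ^ α))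
            ∂(Measure.map (ξ 0) P) := by rw [hξ k]
        _ = _ := lintegral_map hFm (hξm 0)
    rw [hswap]
    simp_rw [hpush]
    have hswap2 : ∑' k : ℕ, ∫⁻ ω, ENNReal.ofReal
          (((k : ℝ) + 1) ^ (-α) * min ‖ξ 0 ω‖ (((k : ℝ) + 1) ^ α)) ∂P
        = ∫⁻ ω, ∑' k : ℕ, ENNReal.ofReal
          (((k : ℝ) + 1) ^ (-α) * min ‖ξ 0 ω‖ (((k : ℝ) + 1) ^ α)) ∂P :=
      (lintegral_tsum fun k =>
        ((measurable_const.mul (((hξm 0).norm).min measurable_const)).ennreal_ofReal).aemeasurable).symm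
    rw [hswap2]
    have hbound : ∀ ω, ∑' k : ℕ, ENNReal.ofReal
          (((k : ℝ) + 1) ^ (-α) * min ‖ξ 0 ω‖ (((k : ℝ) + 1) ^ α))
        ≤ ENNReal.ofReal (2 + (α - 1)⁻¹) * (1 + ENNReal.ofReal (g ω)) := fun ω => by
      refine (pointwise_trunc_sum_le hα (norm_nonneg (ξ 0 ω))).trans ?_
      rw [ENNReal.ofReal_mul (by have h9 : (0:ℝ) < (α-1)⁻¹ := inv_pos.2 (by linarith); linarith : (0:ℝ) ≤ 2 + (α-1)⁻¹)]
      refine mul_le_mul_of_nonneg_left ?_ zero_le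
      rw [ENNReal.ofReal_add zero_le_one (Real.rpow_nonneg (norm_nonneg _) _)]
      simp [hgdef]
    calc ∫⁻ ω, ∑' k : ℕ, ENNReal.ofReal
          (((k : ℝ) + 1) ^ (-α) * min ‖ξ 0 ω‖ (((k : ℝ) + 1) ^ α)) ∂P
        ≤ ∫⁻ ω, ENNReal.ofReal (2 + (α - 1)⁻¹) * (1 + ENNReal.ofReal (g ω)) ∂P :=
          lintegral_mono hbound
      _ = ENNReal.ofReal (2 + (α - 1)⁻¹) * ∫⁻ ω, (1 + ENNReal.ofReal (g ω)) ∂P :=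
          lintegral_const_mul' _ _ ENNReal.ofReal_ne_top
      _ < ⊤ := by
          refine ENNReal.mul_lt_top ENNReal.ofReal_lt_top ?_
          rw [lintegral_add_left measurable_const, lintegral_one, measure_univ]
          exact ENNReal.add_lt_top.2 ⟨ENNReal.one_lt_top, hmom⟩
  have hae_trunc : ∀ᵐ ω ∂P, ∑' k : ℕ, ENNReal.ofReal (u k ω) < ⊤ :=
    ae_lt_top (Measurable.ennreal_tsum fun k => (hum k).ennreal_ofReal) hT.ne
  obtain ⟨m, hm_pos, hslln⟩ := slln_E hlam hEm hindep hE
  filter_upwards [hBC, hae_trunc, ae_pos_E hlam hEm hE, hslln] with ω hBCω htruncω hposω hsllnω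
  -- τ k > 0
  set τ : ℕ → ℝ := fun k => ∑ i ∈ Finset.range (k + 1), E i ω with hτdef
  have hτpos : ∀ k, 0 < τ k := fun k =>
    Finset.sum_pos (fun i _ => hposω i) Finset.nonempty_range_add_one
  -- Summable truncated real series
  have hsumu : Summable (fun k => u k ω) := by
    have h1 : Summable (fun k => (ENNReal.ofReal (u k ω)).toReal) :=
      ENNReal.summable_toReal htruncω.ne
    refine h1.congr fun k => ?_
    rw [ENNReal.toReal_ofReal (hu_nonneg k ω)]
  -- eventual equality with untruncated
  obtain ⟨K1, hK1⟩ := eventually_atTop.1 hBCω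
  have huk_eq : ∀ k ≥ K1, u k ω = ((k : ℝ) + 1) ^ (-α) * ‖ξ k ω‖ := by
    intro k hk
    have hnot := hK1 k hk
    have h2 : ‖ξ k ω‖ ^ (1 / α) < (k : ℝ) + 1 := not_le.1 hnot
    have h3 : ‖ξ k ω‖ ≤ ((k : ℝ) + 1) ^ α := by
      have h4 := Real.rpow_le_rpow (Real.rpow_nonneg (norm_nonneg _) _) h2.le hα0.le
      rwa [one_div, Real.rpow_inv_rpow (norm_nonneg _) (ne_of_gt hα0)] at h4
    rw [hudef]
    simp only [min_eq_left h3]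
  have hsum_full : Summable (fun k : ℕ => ((k : ℝ) + 1) ^ (-α) * ‖ξ k ω‖) := by
    refine (summable_nat_add_iff K1).1 ?_
    refine ((summable_nat_add_iff K1).2 hsumu).congr fun k => ?_
    exact huk_eq (k + K1) (Nat.le_add_left K1 k)
  -- lower bound on τ from SLLN
  have hev : ∀ᶠ n : ℕ in atTop, (m / 2) * n ≤ ∑ i ∈ Finset.range n, E i ω := by
    have h5 : ∀ᶠ n : ℕ in atTop, (n : ℝ)⁻¹ * ∑ i ∈ Finset.range n, E i ω ∈ Ioi (m / 2) :=
      hsllnω (Ioi_mem_nhds (by linarith))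
    filter_upwards [h5, eventually_ge_atTop 1] with n hn hn1
    have hn0 : (0 : ℝ) < n := by exact_mod_cast hn1
    have := hn
    rw [mem_Ioi] at this
    calc (m / 2) * n ≤ ((n : ℝ)⁻¹ * ∑ i ∈ Finset.range n, E i ω) * n :=
        mul_le_mul_of_nonneg_right this.le hn0.le
      _ = ∑ i ∈ Finset.range n, E i ω := by field_simp
  obtain ⟨K2, hK2⟩ := eventually_atTop.1 hev
  -- norm bound on terms
  have hterm_le : ∀ k ≥ K2, ‖(τ k ^ (-α)) • ξ k ω‖
      ≤ (m / 2) ^ (-α) * (((k : ℝ) + 1) ^ (-α) * ‖ξ k ω‖) := by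
    intro k hk
    have hτk : (m / 2) * ((k : ℝ) + 1) ≤ τ k := by
      have := hK2 (k + 1) (le_trans hk (Nat.le_succ k))
      rw [hτdef]
      push_cast at this ⊢
      linarith
    have hmk : (0 : ℝ) < (m / 2) * ((k : ℝ) + 1) := by positivity
    have h6 : τ k ^ (-α) ≤ ((m / 2) * ((k : ℝ) + 1)) ^ (-α) :=
      Real.rpow_le_rpow_of_nonpos hmk hτk (by linarith)
    have h7 : ((m / 2) * ((k : ℝ) + 1)) ^ (-α) = (m / 2) ^ (-α) * ((k : ℝ) + 1) ^ (-α) :=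
      Real.mul_rpow (by positivity) (by positivity)
    rw [norm_smul, Real.norm_eq_abs, abs_of_nonneg (Real.rpow_nonneg (hτpos k).le _)]
    calc τ k ^ (-α) * ‖ξ k ω‖ ≤ ((m / 2) * ((k : ℝ) + 1)) ^ (-α) * ‖ξ k ω‖ :=
        mul_le_mul_of_nonneg_right h6 (norm_nonneg _)
      _ = (m / 2) ^ (-α) * (((k : ℝ) + 1) ^ (-α) * ‖ξ k ω‖) := by rw [h7]; ring
  -- summability of the series of terms
  have hsum_norm : Summable (fun k : ℕ => ‖(τ k ^ (-α)) • ξ k ω‖) := by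
    refine (summable_nat_add_iff K2).1 ?_
    refine Summable.of_nonneg_of_le (fun k => norm_nonneg _)
      (fun k => hterm_le (k + K2) (Nat.le_add_left K2 k)) ?_
    exact (((summable_nat_add_iff K2).2 hsum_full).mul_left _)
  have hsum : Summable (fun k : ℕ => (τ k ^ (-α)) • ξ k ω) := hsum_norm.of_norm
  exact ⟨∑' k : ℕ, (τ k ^ (-α)) • ξ k ω, hsum.hasSum.tendsto_sum_nat⟩

set_option maxHeartbeats 1000000 in
theorem converse_dir
    {Ω : Type*} [MeasurableSpace Ω] (P : Measure Ω) [IsProbabilityMeasure P]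
    {d : ℕ} (lam α : ℝ) (hlam : 0 < lam) (hα : 1 < α)
    (E : ℕ → Ω → ℝ) (ξ : ℕ → Ω → EuclideanSpace ℝ (Fin d))
    (hEm : ∀ k, Measurable (E k)) (hξm : ∀ k, Measurable (ξ k))
    (hindep : iIndepFun (m := jointMS d) (jointFam E ξ) P)
    (hE : ∀ k, Measure.map (E k) P = expMeasure lam)
    (hξ : ∀ k, Measure.map (ξ k) P = Measure.map (ξ 0) P)
    (hconv : ∀ᵐ ω ∂P, ∃ l : EuclideanSpace ℝ (Fin d),
        Tendsto (fun n => ∑ k ∈ Finset.range n,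
            ((∑ i ∈ Finset.range (k + 1), E i ω) ^ (-α)) • ξ k ω)
          atTop (nhds l)) :
    ∫⁻ ω, ENNReal.ofReal (‖ξ 0 ω‖ ^ (1 / α)) ∂P < ⊤ := by
  have hα0 : (0 : ℝ) < α := by linarith
  set g : Ω → ℝ := fun ω => ‖ξ 0 ω‖ ^ (1 / α) with hgdef
  have hgm : Measurable g := by fun_prop
  set B : ℕ → Set (EuclideanSpace ℝ (Fin d)) := fun k => {v | ((k : ℝ) + 1) ^ α ≤ ‖v‖}
    with hBdef
  have hBm : ∀ k, MeasurableSet (B k) := fun k => measurableSet_le measurable_const (by fun_prop)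
  obtain ⟨m, hm_pos, hslln⟩ := slln_E hlam hEm hindep hE
  -- a.e. eventually not in the bad sets
  have hae_ev : ∀ᵐ ω ∂P, ∀ᶠ k in atTop, ω ∉ ξ k ⁻¹' B k := by
    filter_upwards [hconv, ae_pos_E hlam hEm hE, hslln] with ω hconvω hposω hsllnω
    set τ : ℕ → ℝ := fun k => ∑ i ∈ Finset.range (k + 1), E i ω with hτdef
    have hτpos : ∀ k, 0 < τ k := fun k =>
      Finset.sum_pos (fun i _ => hposω i) Finset.nonempty_range_add_one
    obtain ⟨l, hl⟩ := hconvω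
    -- terms tend to zero
    have hterm0 : Tendsto (fun k : ℕ => (τ k ^ (-α)) • ξ k ω) atTop (𝓝 0) := by
      have h1 := (hl.comp (tendsto_add_atTop_nat 1)).sub hl
      simp only [sub_self] at h1
      refine h1.congr fun k => ?_
      simp only [Function.comp_apply]
      rw [Finset.sum_range_succ]
      abel
    have hnorm0 : Tendsto (fun k : ℕ => τ k ^ (-α) * ‖ξ k ω‖) atTop (𝓝 0) := by
      have h2 := hterm0.norm
      rw [norm_zero] at h2
      refine h2.congr fun k => ?_
      rw [norm_smul, Real.norm_eq_abs, abs_of_nonneg (Real.rpow_nonneg (hτpos k).le _)]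
    -- upper bound on τ from SLLN
    have hev : ∀ᶠ k : ℕ in atTop, τ k ≤ (2 * m) * ((k : ℝ) + 1) := by
      have h5 : ∀ᶠ n : ℕ in atTop, (n : ℝ)⁻¹ * ∑ i ∈ Finset.range n, E i ω ∈ Iio (2 * m) :=
        hsllnω (Iio_mem_nhds (by linarith))
      rw [eventually_atTop] at h5 ⊢
      obtain ⟨N, hN⟩ := h5
      refine ⟨N, fun k hk => ?_⟩
      have h6 := hN (k + 1) (le_trans hk (Nat.le_succ k))
      rw [mem_Iio] at h6
      have hk0 : (0 : ℝ) < (k : ℝ) + 1 := by positivity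
      have h7 : ((k + 1 : ℕ) : ℝ)⁻¹ * τ k < 2 * m := by
        rw [hτdef]; exact_mod_cast h6
      have h8 : ((k + 1 : ℕ) : ℝ) = (k : ℝ) + 1 := by push_cast; ring
      rw [h8] at h7
      calc τ k = (((k : ℝ) + 1)⁻¹ * τ k) * ((k : ℝ) + 1) := by field_simp
        _ ≤ (2 * m) * ((k : ℝ) + 1) := mul_le_mul_of_nonneg_right h7.le hk0.le
    -- squeeze
    have hsq : Tendsto (fun k : ℕ => ((k : ℝ) + 1) ^ (-α) * ‖ξ k ω‖) atTop (𝓝 0) := by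
      have hbd : ∀ᶠ k : ℕ in atTop, ((k : ℝ) + 1) ^ (-α) * ‖ξ k ω‖
          ≤ (2 * m) ^ α * (τ k ^ (-α) * ‖ξ k ω‖) := by
        filter_upwards [hev] with k hk
        have hk0 : (0 : ℝ) < (k : ℝ) + 1 := by positivity
        have h9 : τ k / (2 * m) ≤ (k : ℝ) + 1 := by
          rw [div_le_iff₀ (by linarith)]
          linarith [hk]
        have h10 : ((k : ℝ) + 1) ^ (-α) ≤ (τ k / (2 * m)) ^ (-α) :=
          Real.rpow_le_rpow_of_nonpos (div_pos (hτpos k) (by linarith)) h9 (by linarith)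
        have h11 : (τ k / (2 * m)) ^ (-α) = (2 * m) ^ α * τ k ^ (-α) := by
          rw [Real.div_rpow (hτpos k).le (by linarith : (0:ℝ) ≤ 2*m),
            Real.rpow_neg (show (0:ℝ) ≤ 2*m by linarith) α, div_eq_mul_inv, inv_inv, mul_comm]
        calc ((k : ℝ) + 1) ^ (-α) * ‖ξ k ω‖ ≤ (τ k / (2 * m)) ^ (-α) * ‖ξ k ω‖ :=
            mul_le_mul_of_nonneg_right h10 (norm_nonneg _)
          _ = (2 * m) ^ α * (τ k ^ (-α) * ‖ξ k ω‖) := by rw [h11]; ring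
      have hconst : Tendsto (fun k : ℕ => (2 * m) ^ α * (τ k ^ (-α) * ‖ξ k ω‖)) atTop (𝓝 0) := by
        have := hnorm0.const_mul ((2 * m) ^ α)
        simpa using this
      refine squeeze_zero' ?_ hbd hconst
      filter_upwards with k
      exact mul_nonneg (Real.rpow_nonneg (by positivity) _) (norm_nonneg _)
    -- eventually norm < (k+1)^α
    have h12 : ∀ᶠ k : ℕ in atTop, ((k : ℝ) + 1) ^ (-α) * ‖ξ k ω‖ < 1 :=
      hsq (Iio_mem_nhds one_pos)
    filter_upwards [h12] with k hk
    intro hmem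
    have hm2 : ((k : ℝ) + 1) ^ α ≤ ‖ξ k ω‖ := hmem
    have hk0 : (0 : ℝ) < (k : ℝ) + 1 := by positivity
    have h13 : (1 : ℝ) ≤ ((k : ℝ) + 1) ^ (-α) * ‖ξ k ω‖ := by
      calc (1:ℝ) = ((k : ℝ) + 1) ^ (-α) * ((k : ℝ) + 1) ^ α := by
            rw [← Real.rpow_add hk0]; simp
        _ ≤ ((k : ℝ) + 1) ^ (-α) * ‖ξ k ω‖ :=
            mul_le_mul_of_nonneg_left hm2 (Real.rpow_nonneg hk0.le _)
    linarith
  -- Borel-Cantelli II contrapositive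
  have hsum_fin : ∑' k : ℕ, P (ξ k ⁻¹' B k) ≠ ∞ := by
    intro htop
    have hone := measure_limsup_eq_one (fun k => (hξm k) (hBm k)) (iIndepSet_xi hindep hξm hBm)
      htop
    have hzero : P (limsup (fun k => ξ k ⁻¹' B k) atTop) = 0 := by
      refine measure_eq_zero_iff_ae_notMem.2 ?_
      filter_upwards [hae_ev] with ω hω
      intro hmem
      rw [mem_limsup_iff_frequently_mem] at hmem
      exact (not_frequently.2 hω) hmem
    rw [hone] at hzero
    exact one_ne_zero hzero
  -- identify the tail probabilities
  have hPs : ∀ k : ℕ, P (ξ k ⁻¹' B k) = P {ω | (k : ℝ) + 1 ≤ g ω} := by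
    intro k
    rw [← Measure.map_apply (μ := P) (hξm k) (hBm k), hξ k,
      Measure.map_apply (μ := P) (hξm 0) (hBm k)]
    congr 1
    ext ω
    simp only [mem_preimage, hBdef, mem_setOf_eq, hgdef]
    have hk0 : (0 : ℝ) ≤ (k : ℝ) + 1 := by positivity
    constructor
    · intro h
      have h2 := Real.rpow_le_rpow (by positivity) h (by positivity : (0:ℝ) ≤ 1/α)
      rw [one_div, Real.rpow_rpow_inv hk0 (ne_of_gt hα0)] at h2
      rwa [one_div]
    · intro h
      rw [one_div] at h
      have h2 := Real.rpow_le_rpow hk0 h hα0.le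
      rwa [Real.rpow_inv_rpow (norm_nonneg _) (ne_of_gt hα0)] at h2
  refine lt_of_le_of_lt (lintegral_le_tsum_meas P hgm) ?_
  rw [measure_univ]
  refine ENNReal.add_lt_top.2 ⟨ENNReal.one_lt_top, ?_⟩
  rw [lt_top_iff_ne_top]
  intro htop
  apply hsum_fin
  rw [← htop]
  exact (tsum_congr hPs)

end Aux2

/-- **Example 2 of Section 4.** Let `α > 1`, let `τ_k` be the arrival times of a Poisson
process with intensity `λ` (partial sums of i.i.d. rate-`λ` exponentials `E_k`) and let
`(ξ_k)` be i.i.d. `ℝ^d`-valued random variables independent of `(E_k)`. Then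
`Σ_k τ_k^{−α} ξ_k` converges a.s. iff `E[‖ξ₁‖^{1/α}] < ∞`. -/
theorem power_shot_noise_series_converges_iff_moment
    {Ω : Type*} [MeasurableSpace Ω] (P : Measure Ω) [IsProbabilityMeasure P]
    {d : ℕ} (lam α : ℝ) (hlam : 0 < lam) (hα : 1 < α)
    (E : ℕ → Ω → ℝ) (ξ : ℕ → Ω → EuclideanSpace ℝ (Fin d))
    (hEm : ∀ k, Measurable (E k)) (hξm : ∀ k, Measurable (ξ k))
    (hindep : iIndepFun (m := jointMS d) (jointFam E ξ) P)
    (hE : ∀ k, Measure.map (E k) P = expMeasure lam)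
    (hξ : ∀ k, Measure.map (ξ k) P = Measure.map (ξ 0) P) :
    (∀ᵐ ω ∂P, ∃ l : EuclideanSpace ℝ (Fin d),
        Tendsto (fun n => ∑ k ∈ Finset.range n,
            ((∑ i ∈ Finset.range (k + 1), E i ω) ^ (-α)) • ξ k ω)
          atTop (nhds l)) ↔
      ∫⁻ ω, ENNReal.ofReal (‖ξ 0 ω‖ ^ (1 / α)) ∂P < ⊤ := by
  constructor
  · intro hconv
    exact converse_dir P lam α hlam hα E ξ hEm hξm hindep hE hξ hconv
  · intro hmom
    exact forward_dir P lam α hlam hα E ξ hEm hξm hindep hE hξ hmom
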